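/- Let σ be the q-shift automorphism of F[y] sending y to qy, where F has characteristic zero and q ∈ F is neither zero nor a root of unity. A polynomial p ∈ F[y] is σ-special (i.e., p | σ^ℓ(p) for some nonzero integer ℓ) if and only if p = c·y^k for some c ∈ F and k ∈ ℕ. -/

import Mathlib

open Polynomial

lemma coeff_aeval_C_mul_X {F : Type*} [CommRing F] (a : F) (p : F[X]) (n : ℕ) :
    ((aeval (C a * X) p : F[X])).coeff n = p.coeff n * a ^ n := by
  induction p using Polynomial.induction_on' with
  | add f g hf hg => simp [hf, hg, add_mul]
  | monomial m b =>
      simp only [aeval_monomial, mul_pow, ← C_pow, algebraMap_eq]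
      rw [← mul_assoc, ← C_mul]
      simp only [coeff_C_mul, coeff_X_pow, coeff_monomial]
      by_cases h : n = m
      · simp [h]
      · rw [if_neg h, if_neg (fun hh => h hh.symm)]; ring

lemma algEquiv_pow_X {F : Type*} [CommRing F] (τ : F[X] ≃ₐ[F] F[X]) (a : F)
    (hτ : τ X = C a * X) (n : ℕ) : (τ ^ n) X = C (a ^ n) * X := by
  induction n with
  | zero => simp
  | succ m ih =>
      have hc : (τ ^ m) (C a) = C a := by
        simpa [algebraMap_eq] using (τ ^ m).commutes a
      rw [pow_succ, AlgEquiv.mul_apply, hτ, map_mul, hc, ih, ← mul_assoc, ← C_mul, ← pow_succ']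

lemma algEquiv_zpow_X {F : Type*} [Field F] (σ : F[X] ≃ₐ[F] F[X]) (q : F) (hq0 : q ≠ 0)
    (hσ : σ X = C q * X) (ℓ : ℤ) : (σ ^ ℓ) X = C (q ^ ℓ) * X := by
  have hinv : σ⁻¹ X = C q⁻¹ * X := by
    apply σ.injective
    rw [show σ (σ⁻¹ X) = X from σ.apply_symm_apply X, map_mul, hσ,
      show σ (C q⁻¹) = C q⁻¹ by simpa [algebraMap_eq] using σ.commutes q⁻¹, ← mul_assoc,
      ← C_mul, inv_mul_cancel₀ hq0]
    simp
  cases ℓ with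
  | ofNat n => rw [Int.ofNat_eq_coe, zpow_natCast, zpow_natCast, algEquiv_pow_X σ q hσ n]
  | negSucc n =>
      rw [zpow_negSucc, zpow_negSucc, ← inv_pow, ← inv_pow, algEquiv_pow_X σ⁻¹ q⁻¹ hinv]

lemma algEquiv_zpow_apply {F : Type*} [Field F] (σ : F[X] ≃ₐ[F] F[X]) (q : F) (hq0 : q ≠ 0)
    (hσ : σ X = C q * X) (ℓ : ℤ) (p : F[X]) : (σ ^ ℓ) p = aeval (C (q ^ ℓ) * X) p := by
  have : ((σ ^ ℓ : F[X] ≃ₐ[F] F[X]) : F[X] →ₐ[F] F[X]) = aeval (C (q ^ ℓ) * X) := by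
    apply Polynomial.algHom_ext
    simpa using algEquiv_zpow_X σ q hq0 hσ ℓ
  calc (σ ^ ℓ) p = ((σ ^ ℓ : F[X] ≃ₐ[F] F[X]) : F[X] →ₐ[F] F[X]) p := rfl
    _ = aeval (C (q ^ ℓ) * X) p := by rw [this]

lemma zpow_ne_one_of_ne_zero {F : Type*} [Field F] (q : F) (hq0 : q ≠ 0)
    (hqu : ∀ n : ℕ, 0 < n → q ^ n ≠ 1) (m : ℤ) (hm : m ≠ 0) : q ^ m ≠ 1 := by
  intro h
  have habs : q ^ (m.natAbs : ℤ) = 1 := by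
    rcases Int.natAbs_eq m with he | he
    · rw [← he, h]
    · rw [show (m.natAbs : ℤ) = -m by omega, zpow_neg, h, inv_one]
  rw [zpow_natCast] at habs
  exact hqu m.natAbs (Int.natAbs_pos.mpr hm) habs

theorem stmt4 (F : Type*) [Field F] [CharZero F] (q : F) (hq0 : q ≠ 0)
    (hqu : ∀ n : ℕ, 0 < n → q ^ n ≠ 1)
    (σ : Polynomial F ≃ₐ[F] Polynomial F)
    (hσ : σ Polynomial.X = Polynomial.C q * Polynomial.X)
    (p : Polynomial F) :
    (∃ ℓ : ℤ, ℓ ≠ 0 ∧ p ∣ (σ ^ ℓ) p) ↔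
      ∃ (c : F) (k : ℕ), p = Polynomial.C c * Polynomial.X ^ k := by
  constructor
  · rintro ⟨ℓ, hℓ, t, ht⟩
    by_cases hp : p = 0
    · exact ⟨0, 0, by simp [hp]⟩
    set Q := q ^ ℓ with hQ
    have hQ0 : Q ≠ 0 := zpow_ne_zero ℓ hq0
    have hcoeff : ∀ n, ((σ ^ ℓ) p).coeff n = p.coeff n * Q ^ n := by
      intro n
      rw [algEquiv_zpow_apply σ q hq0 hσ ℓ, coeff_aeval_C_mul_X]
    set k := p.natDegree with hk
    -- degree of (σ^ℓ) p equals degree of p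
    have hdeg : ((σ ^ ℓ) p).natDegree = k := by
      apply le_antisymm
      · rw [natDegree_le_iff_coeff_eq_zero]
        intro m hm
        rw [hcoeff, coeff_eq_zero_of_natDegree_lt hm, zero_mul]
      · apply le_natDegree_of_ne_zero
        rw [hcoeff]
        exact mul_ne_zero (mt leadingCoeff_eq_zero.mp hp) (pow_ne_zero _ hQ0)
    have hd0 : (σ ^ ℓ) p ≠ 0 := by
      intro h
      apply mt leadingCoeff_eq_zero.mp hp
      have := hcoeff k
      rw [h, coeff_zero] at this
      exact (mul_eq_zero.mp this.symm).resolve_right (pow_ne_zero _ hQ0)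
    have ht0 : t ≠ 0 := by rintro rfl; rw [mul_zero] at ht; exact hd0 ht
    have htd : t.natDegree = 0 := by
      have := natDegree_mul hp ht0
      rw [← ht, hdeg] at this
      omega
    obtain ⟨u, rfl⟩ : ∃ u : F, t = C u := ⟨t.coeff 0, eq_C_of_natDegree_eq_zero htd⟩
    have hu0 : u ≠ 0 := by simpa using ht0
    have key : ∀ n, p.coeff n * Q ^ n = p.coeff n * u := by
      intro n
      rw [← hcoeff, ht, coeff_mul_C]
    -- every nonzero coefficient index equals k
    have honly : ∀ n, p.coeff n ≠ 0 → n = k := by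
      intro n hn
      by_contra hne
      have h1 : Q ^ n = u := by
        have := key n; exact mul_left_cancel₀ hn this
      have h2 : Q ^ k = u := by
        have := key k
        have hk0 : p.coeff k ≠ 0 := mt leadingCoeff_eq_zero.mp hp
        exact mul_left_cancel₀ hk0 this
      have hQeq : Q ^ n = Q ^ k := h1.trans h2.symm
      -- derive q ^ (ℓ * (n - k)) = 1 with nonzero exponent
      have : q ^ (ℓ * ((n : ℤ) - k)) = 1 := by
        rw [zpow_mul, ← hQ, zpow_sub₀ hQ0, zpow_natCast, zpow_natCast, hQeq,
          div_self (pow_ne_zero _ hQ0)]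
      refine zpow_ne_one_of_ne_zero q hq0 hqu _ ?_ this
      have : (n : ℤ) - k ≠ 0 := by
        intro h; apply hne; omega
      exact mul_ne_zero hℓ this
    refine ⟨p.coeff k, k, ?_⟩
    ext n
    rw [coeff_C_mul, coeff_X_pow]
    by_cases h : n = k
    · simp [h]
    · rw [if_neg h, mul_zero]
      by_contra hn
      exact h (honly n hn)
  · rintro ⟨c, k, rfl⟩
    refine ⟨1, one_ne_zero, ?_⟩
    rw [zpow_one, map_mul, map_pow, hσ,
      show σ (C c) = C c by simpa [algebraMap_eq] using σ.commutes c]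
    exact ⟨C (q ^ k), by rw [mul_pow, ← C_pow]; ring⟩
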